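/- Let 𝒜 be a Gotzmann family of d-element subsets of a finite set X, let i ∈ X, and let (𝒜₀, 𝒜₁) be the i-decomposition of 𝒜. Fix a linear order on X ∖ {i}, and let L₀ and L₁ be the lex segments of d-element and (d−1)-element subsets of X ∖ {i} with |L₀| = |𝒜₀| and |L₁| = |𝒜₁|. If ∂⁺L₁ ⊆ L₀ (upper shadow taken in X ∖ {i}), then for every A ∈ 𝒜 with i ∈ A and every j ∈ X ∖ A, the set (A ∖ {i}) ∪ {j} belongs to 𝒜. -/

import Mathlib

/-- The upper shadow `∂⁺𝒜 = {A ∪ {x} : A ∈ 𝒜, x ∈ X \ A}` of a family of finite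
sets, taken within the ground set `X`. -/
def upShadowIn {α : Type*} [DecidableEq α] (X : Finset α) (𝒜 : Set (Finset α)) :
    Set (Finset α) :=
  {B | ∃ A ∈ 𝒜, ∃ x ∈ X, x ∉ A ∧ B = insert x A}

/-- A Gotzmann family of `d`-element subsets of the ground set `X`: its upper shadow
(in `X`) is no larger than that of any other family of `d`-element subsets of `X` of
the same cardinality. -/
def IsGotzmannFamily {α : Type*} [DecidableEq α] (X : Finset α) (d : ℕ)
    (𝒜 : Set (Finset α)) : Prop :=
  (∀ A ∈ 𝒜, A ⊆ X ∧ A.card = d) ∧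
    ∀ ℬ : Set (Finset α), (∀ B ∈ ℬ, B ⊆ X ∧ B.card = d) → ℬ.ncard = 𝒜.ncard →
      (upShadowIn X 𝒜).ncard ≤ (upShadowIn X ℬ).ncard

/-- First part `𝒜₀ = {A ∈ 𝒜 : i ∉ A}` of the `i`-decomposition of `𝒜`. -/
def decompZero {α : Type*} (i : α) (𝒜 : Set (Finset α)) : Set (Finset α) :=
  {A ∈ 𝒜 | i ∉ A}

/-- Second part `𝒜₁ = {A \ {i} : A ∈ 𝒜, i ∈ A}` of the `i`-decomposition of `𝒜`. -/
def decompOne {α : Type*} [DecidableEq α] (i : α) (𝒜 : Set (Finset α)) : Set (Finset α) :=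
  {B | ∃ A ∈ 𝒜, i ∈ A ∧ B = A.erase i}

/-- `A` precedes `B` in the lex order on finite sets induced by the strict order `r`:
the `r`-least element of the symmetric difference `A Δ B` lies in `A`. -/
def lexLT {α : Type*} (r : α → α → Prop) (A B : Finset α) : Prop :=
  ∃ x ∈ A, x ∉ B ∧ ∀ y, r y x → (y ∈ A ↔ y ∈ B)

/-- `r` is a strict linear order on the elements of `Y`. -/
def IsLinearOrderOn {α : Type*} (r : α → α → Prop) (Y : Finset α) : Prop :=
  (∀ a ∈ Y, ¬ r a a) ∧
    (∀ a ∈ Y, ∀ b ∈ Y, ∀ c ∈ Y, r a b → r b c → r a c) ∧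
    (∀ a ∈ Y, ∀ b ∈ Y, a ≠ b → r a b ∨ r b a)

/-- A lex segment: a family of `e`-element subsets of `Y` that is an initial segment
of the lex order (induced by the strict order `r`) on `e`-element subsets of `Y`. -/
def IsLexSegmentFamily {α : Type*} (r : α → α → Prop) (Y : Finset α) (e : ℕ)
    (L : Set (Finset α)) : Prop :=
  (∀ B ∈ L, B ⊆ Y ∧ B.card = e) ∧
    ∀ B ∈ L, ∀ A : Finset α, A ⊆ Y → A.card = e → lexLT r A B → A ∈ L

/-- The Alexander dual `𝒜^∨ = {X \ A : A ⊆ X, |A| = d, A ∉ 𝒜}` of a family `𝒜` of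
`d`-element subsets of `X`. -/
def alexDual {α : Type*} [DecidableEq α] (X : Finset α) (d : ℕ) (𝒜 : Set (Finset α)) :
    Set (Finset α) :=
  {B | ∃ A : Finset α, A ⊆ X ∧ A.card = d ∧ A ∉ 𝒜 ∧ B = X \ A}

/-- A family of `d`-element subsets of `X` is dual-Gotzmann if its Alexander dual is
Gotzmann in `X`. -/
def IsDualGotzmann {α : Type*} [DecidableEq α] (X : Finset α) (d : ℕ)
    (𝒜 : Set (Finset α)) : Prop :=
  IsGotzmannFamily X (X.card - d) (alexDual X d 𝒜)

open Finset
open scoped symmDiff FinsetFamily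
set_option maxHeartbeats 2000000

namespace GotzmannAux

variable {α : Type*} [DecidableEq α]

/-- Finset version of the upper shadow within a ground set `Y`. -/
def upShF (Y : Finset α) (𝒜 : Finset (Finset α)) : Finset (Finset α) :=
  𝒜.biUnion fun A => (Y \ A).image fun x => insert x A

lemma mem_upShF {Y : Finset α} {𝒜 : Finset (Finset α)} {B : Finset α} :
    B ∈ upShF Y 𝒜 ↔ ∃ A ∈ 𝒜, ∃ x ∈ Y, x ∉ A ∧ B = insert x A := by
  simp only [upShF, mem_biUnion, mem_image, mem_sdiff]
  constructor
  · rintro ⟨A, hA, x, ⟨hxY, hxA⟩, rfl⟩; exact ⟨A, hA, x, hxY, hxA, rfl⟩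
  · rintro ⟨A, hA, x, hxY, hxA, rfl⟩; exact ⟨A, hA, x, ⟨hxY, hxA⟩, rfl⟩

lemma coe_upShF (Y : Finset α) (𝒜 : Finset (Finset α)) :
    (↑(upShF Y 𝒜) : Set (Finset α)) = upShadowIn Y ↑𝒜 := by
  ext B
  simp only [Finset.mem_coe, mem_upShF, upShadowIn, Set.mem_setOf_eq]

lemma upShF_subset_ground {Y : Finset α} {𝒜 : Finset (Finset α)}
    (h : ∀ A ∈ 𝒜, A ⊆ Y) : ∀ B ∈ upShF Y 𝒜, B ⊆ Y := by
  intro B hB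
  obtain ⟨A, hA, x, hxY, _, rfl⟩ := mem_upShF.1 hB
  exact insert_subset hxY (h A hA)

/-- Kruskal–Katona, upper-shadow / abstract-lex-segment form: a lex segment
minimizes the upper shadow among families of `e`-sets in `Y` of its size. -/
lemma kk_upper {Y : Finset α} {r : α → α → Prop} (hr : IsLinearOrderOn r Y) {e : ℕ}
    {L Pf : Finset (Finset α)}
    (hL1 : ∀ B ∈ L, B ⊆ Y ∧ B.card = e)
    (hL2 : ∀ B ∈ L, ∀ A : Finset α, A ⊆ Y → A.card = e → lexLT r A B → A ∈ L)
    (hPf : ∀ B ∈ Pf, B ⊆ Y ∧ B.card = e)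
    (hcard : L.card = Pf.card) :
    (upShF Y L).card ≤ (upShF Y Pf).card := by
  rcases Y.eq_empty_or_nonempty with rfl | hYne
  · have : upShF (∅ : Finset α) L = ∅ := by
      apply eq_empty_of_forall_notMem
      intro B hB
      obtain ⟨A, _, x, hx, _⟩ := mem_upShF.1 hB
      exact absurd hx (notMem_empty x)
    simp [this]
  set n := Y.card with hn
  have hnpos : 0 < n := card_pos.2 hYne
  -- a linear order on the subtype, reversing `r`
  let s : {x // x ∈ Y} → {x // x ∈ Y} → Prop := fun a b => r b.1 a.1
  haveI : IsIrrefl {x // x ∈ Y} s := ⟨fun a => hr.1 a.1 a.2⟩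
  haveI : IsTrans {x // x ∈ Y} s :=
    ⟨fun a b c hab hbc => hr.2.1 c.1 c.2 b.1 b.2 a.1 a.2 hbc hab⟩
  haveI : IsTrichotomous {x // x ∈ Y} s := by
    constructor
    intro a b hab hba
    by_contra h
    rcases hr.2.2 b.1 b.2 a.1 a.2 (fun hh => h (Subtype.ext hh.symm)) with h' | h'
    · exact hab h'
    · exact hba h'
  haveI : IsStrictTotalOrder {x // x ∈ Y} s := {}
  haveI : DecidableRel s := fun a b => Classical.dec _
  letI : LinearOrder {x // x ∈ Y} := linearOrderOfSTO s
  have hlt : ∀ a b : {x // x ∈ Y}, a < b ↔ s a b := fun _ _ => Iff.rfl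
  have hcardY : Fintype.card {x // x ∈ Y} = n := Fintype.card_coe Y
  let φ : Fin n ≃o {x // x ∈ Y} := monoEquivOfFin _ hcardY
  let i0 : Fin n := ⟨0, hnpos⟩
  let g : α → Fin n := fun a => if h : a ∈ Y then φ.symm ⟨a, h⟩ else i0
  have hg : ∀ a (h : a ∈ Y), g a = φ.symm ⟨a, h⟩ := fun a h => dif_pos h
  have hgr : ∀ a ∈ Y, ∀ b ∈ Y, (r a b ↔ g b < g a) := by
    intro a ha b hb
    rw [hg a ha, hg b hb, φ.symm.lt_iff_lt, hlt]
  have hginj : ∀ a ∈ Y, ∀ b ∈ Y, g a = g b → a = b := by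
    intro a ha b hb hab
    rw [hg a ha, hg b hb] at hab
    have := φ.symm.injective hab
    exact congrArg Subtype.val this
  have hgsurj : ∀ m : Fin n, ∃ x ∈ Y, g x = m := by
    intro m
    refine ⟨(φ m).1, (φ m).2, ?_⟩
    rw [hg _ (φ m).2]
    have : (⟨(φ m).1, (φ m).2⟩ : {x // x ∈ Y}) = φ m := rfl
    rw [this, φ.symm_apply_apply]
  -- membership transfer
  have hmemg : ∀ {A : Finset α}, A ⊆ Y → ∀ x ∈ Y, (g x ∈ A.image g ↔ x ∈ A) := by
    intro A hA x hx
    constructor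
    · intro h
      obtain ⟨a, ha, hax⟩ := mem_image.1 h
      rwa [← hginj a (hA ha) x hx hax]
    · exact fun h => mem_image_of_mem g h
  let F : Finset α → Finset (Fin n) := fun A => (A.image g)ᶜ
  have hFcard : ∀ {A : Finset α}, A ⊆ Y → (F A).card = n - A.card := by
    intro A hA
    rw [Finset.card_compl, Fintype.card_fin, card_image_of_injOn
      (fun a ha b hb hab => hginj a (hA ha) b (hA hb) hab)]
  have hFinj : ∀ {A B : Finset α}, A ⊆ Y → B ⊆ Y → F A = F B → A = B := by
    intro A B hA hB hFAB
    have himg : A.image g = B.image g := by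
      have := congrArg compl hFAB
      simpa [F, compl_compl] using this
    ext x
    constructor
    · intro hx
      have := (hmemg hA x (hA hx)).2 hx
      rw [himg] at this
      exact (hmemg hB x (hA hx)).1 this
    · intro hx
      have := (hmemg hB x (hB hx)).2 hx
      rw [← himg] at this
      exact (hmemg hA x (hB hx)).1 this
  -- shadow correspondence
  have hshadow : ∀ (𝒬 : Finset (Finset α)), (∀ B ∈ 𝒬, B ⊆ Y) →
      (𝒬.image F).shadow = (upShF Y 𝒬).image F := by
    intro 𝒬 h𝒬
    ext t
    rw [mem_shadow_iff]
    constructor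
    · rintro ⟨u, hu, m, hm, rfl⟩
      obtain ⟨A, hA, rfl⟩ := mem_image.1 hu
      obtain ⟨x, hxY, rfl⟩ := hgsurj m
      have hxA : x ∉ A := by
        intro hxA
        have := (hmemg (h𝒬 A hA) x hxY).2 hxA
        rw [Finset.mem_compl] at hm
        exact hm this
      refine mem_image.2 ⟨insert x A, mem_upShF.2 ⟨A, hA, x, hxY, hxA, rfl⟩, ?_⟩
      show ((insert x A).image g)ᶜ = (F A).erase (g x)
      rw [image_insert, Finset.compl_insert]
    · intro ht
      obtain ⟨B, hB, rfl⟩ := mem_image.1 ht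
      obtain ⟨A, hA, x, hxY, hxA, rfl⟩ := mem_upShF.1 hB
      have hgx : g x ∈ F A := by
        rw [Finset.mem_compl]
        intro h
        exact hxA ((hmemg (h𝒬 A hA) x hxY).1 h)
      refine ⟨F A, mem_image_of_mem F hA, g x, hgx, ?_⟩
      show (F A).erase (g x) = ((insert x A).image g)ᶜ
      rw [image_insert, Finset.compl_insert]
  -- the image of L is an initial segment of colex
  have hinit : Finset.Colex.IsInitSeg (L.image F) (n - e) := by
    constructor
    · intro t ht
      obtain ⟨B, hB, rfl⟩ := mem_image.1 ht
      rw [hFcard (hL1 B hB).1, (hL1 B hB).2]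
    · rintro u t hu ⟨hlt', hcardt⟩
      obtain ⟨B, hB, rfl⟩ := mem_image.1 hu
      have hBY := (hL1 B hB).1
      have hBe := (hL1 B hB).2
      have hen : e ≤ n := hBe ▸ card_le_card hBY
      set A : Finset α := Y.filter (fun a => g a ∉ t) with hAdef
      have hAY : A ⊆ Y := filter_subset _ _
      have himgA : A.image g = tᶜ := by
        ext m
        rw [Finset.mem_compl]
        constructor
        · rintro hm
          obtain ⟨a, ha, rfl⟩ := mem_image.1 hm
          exact (mem_filter.1 ha).2
        · intro hm
          obtain ⟨x, hxY, rfl⟩ := hgsurj m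
          exact mem_image_of_mem g (mem_filter.2 ⟨hxY, hm⟩)
      have hFA : F A = t := by
        show (A.image g)ᶜ = t
        rw [himgA, compl_compl]
      have hAcard : A.card = e := by
        have h1 : (A.image g).card = A.card := card_image_of_injOn
          (fun a ha b hb hab => hginj a (hAY ha) b (hAY hb) hab)
        rw [← h1, himgA, Finset.card_compl, Fintype.card_fin, hcardt]
        omega
      -- lexLT r A B from colex
      have hlex : lexLT r A B := by
        obtain ⟨m, hmFB, hmt, hmax⟩ :=
          Finset.Colex.toColex_lt_toColex_iff_exists_forall_lt.1 hlt'
        have hmgA : m ∈ A.image g := by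
          rw [← hFA, Finset.mem_compl, not_not] at hmt
          exact hmt
        obtain ⟨x, hxA, hxm⟩ := mem_image.1 hmgA
        have hxY : x ∈ Y := hAY hxA
        have hxB : x ∉ B := by
          intro hxB
          exact (Finset.mem_compl.1 hmFB) (hxm ▸ mem_image_of_mem g hxB)
        have hBA : ∀ y ∈ B, y ∉ A → r x y := by
          intro y hyB hyA
          have hgy_t : g y ∈ t := by
            rw [← hFA, Finset.mem_compl]
            intro h
            exact hyA ((hmemg hAY y (hBY hyB)).1 h)
          have hgy_FB : g y ∉ F B := by
            rw [Finset.mem_compl, not_not]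
            exact mem_image_of_mem g hyB
          have hlt2 := hmax _ hgy_t hgy_FB
          exact (hgr x hxY y (hBY hyB)).2 (hxm ▸ hlt2)
        set S := A ∆ B with hSdef
        have hxS : x ∈ S := Finset.mem_symmDiff.2 (Or.inl ⟨hxA, hxB⟩)
        have hSY : S ⊆ Y := by
          intro y hy
          rcases Finset.mem_symmDiff.1 hy with ⟨h, _⟩ | ⟨h, _⟩
          · exact hAY h
          · exact hBY h
        have hSne : (S.image g).Nonempty := ⟨g x, mem_image_of_mem g hxS⟩
        obtain ⟨x', hx'S, hgx'⟩ := mem_image.1 (max'_mem _ hSne)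
        have hx'Y : x' ∈ Y := hSY hx'S
        have hmaxS : ∀ y ∈ S, g y ≤ g x' := fun y hy =>
          hgx' ▸ le_max' _ _ (mem_image_of_mem g hy)
        have hx'AB : x' ∈ A ∧ x' ∉ B := by
          rcases Finset.mem_symmDiff.1 hx'S with h | ⟨h1, h2⟩
          · exact h
          · have hrxx' := hBA x' h1 h2
            have h3 : g x' < g x := (hgr x hxY x' hx'Y).1 hrxx'
            exact absurd (hmaxS x hxS) (not_le.2 h3)
        refine ⟨x', hx'AB.1, hx'AB.2, fun y hyx' => ?_⟩
        by_contra hiff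
        have hy' : (y ∈ A ∧ y ∉ B) ∨ (y ∈ B ∧ y ∉ A) := by tauto
        have hyS : y ∈ S := Finset.mem_symmDiff.2 hy'
        have hyY : y ∈ Y := hSY hyS
        have h3 : g x' < g y := (hgr y hyY x' hx'Y).1 hyx'
        exact absurd (hmaxS y hyS) (not_le.2 h3)
      exact mem_image.2 ⟨A, hL2 B hB A hAY hAcard hlex, hFA⟩
  -- apply Kruskal-Katona
  have hsized : (↑(Pf.image F) : Set (Finset (Fin n))).Sized (n - e) := by
    intro t ht
    obtain ⟨B, hB, rfl⟩ := mem_image.1 ht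
    rw [hFcard (hPf B hB).1, (hPf B hB).2]
  have hPinj : Set.InjOn F ↑Pf := fun a ha b hb =>
    hFinj (hPf a ha).1 (hPf b hb).1
  have hLinj : Set.InjOn F ↑L := fun a ha b hb =>
    hFinj (hL1 a ha).1 (hL1 b hb).1
  have hcc : (L.image F).card ≤ (Pf.image F).card := by
    rw [card_image_of_injOn hLinj, card_image_of_injOn hPinj, hcard]
  have hkk := Finset.kruskal_katona hsized hcc hinit
  have hLsub := upShF_subset_ground (𝒜 := L) (fun B hB => (hL1 B hB).1)
  have hPsub := upShF_subset_ground (𝒜 := Pf) (fun B hB => (hPf B hB).1)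
  have e1 : ((L.image F).shadow).card = (upShF Y L).card := by
    rw [hshadow L (fun B hB => (hL1 B hB).1)]
    exact card_image_of_injOn (fun a ha b hb => hFinj (hLsub a ha) (hLsub b hb))
  have e2 : ((Pf.image F).shadow).card = (upShF Y Pf).card := by
    rw [hshadow Pf (fun B hB => (hPf B hB).1)]
    exact card_image_of_injOn (fun a ha b hb => hFinj (hPsub a ha) (hPsub b hb))
  have hkk' : ((L.image F).shadow).card ≤ ((Pf.image F).shadow).card := by
    convert hkk using 4 <;> exact Subsingleton.elim _ _
  calc (upShF Y L).card = ((L.image F).shadow).card := e1.symm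
    _ ≤ ((Pf.image F).shadow).card := hkk'
    _ = (upShF Y Pf).card := e2

lemma card_upShF_decomp (X : Finset α) (i : α) (hi : i ∈ X) (ℱ : Finset (Finset α)) :
    (upShF X ℱ).card
      = (upShF (X.erase i) (ℱ.filter (fun A => i ∉ A))).card
        + ((ℱ.filter (fun A => i ∉ A)) ∪
            upShF (X.erase i) ((ℱ.filter (fun A => i ∈ A)).image (fun A => A.erase i))).card := by
  classical
  set Y := X.erase i with hYdef
  set B0 := ℱ.filter (fun A => i ∉ A) with hB0
  set B1 := (ℱ.filter (fun A => i ∈ A)).image (fun A => A.erase i) with hB1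
  have h1 : (upShF X ℱ).filter (fun B => i ∉ B) = upShF Y B0 := by
    ext B
    simp only [mem_filter, mem_upShF]
    constructor
    · rintro ⟨⟨A, hA, x, hxX, hxA, rfl⟩, hiB⟩
      have hiA : i ∉ A := fun h => hiB (mem_insert_of_mem h)
      have hxi : x ≠ i := fun h => hiB (h ▸ mem_insert_self x A)
      exact ⟨A, mem_filter.2 ⟨hA, hiA⟩, x, mem_erase.2 ⟨hxi, hxX⟩, hxA, rfl⟩
    · rintro ⟨A, hA, x, hxY, hxA, rfl⟩
      obtain ⟨hAF, hiA⟩ := mem_filter.1 hA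
      obtain ⟨hxi, hxX⟩ := mem_erase.1 hxY
      refine ⟨⟨A, hAF, x, hxX, hxA, rfl⟩, fun h => ?_⟩
      rcases mem_insert.1 h with h' | h'
      · exact hxi h'.symm
      · exact hiA h'
  have h2 : (upShF X ℱ).filter (fun B => i ∈ B) = (B0 ∪ upShF Y B1).image (insert i) := by
    ext B
    constructor
    · intro hB
      obtain ⟨hB', hiB⟩ := mem_filter.1 hB
      obtain ⟨A, hA, x, hxX, hxA, rfl⟩ := mem_upShF.1 hB'
      by_cases hxi : x = i
      · subst hxi
        exact mem_image.2 ⟨A, mem_union_left _ (mem_filter.2 ⟨hA, hxA⟩), rfl⟩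
      · have hiA : i ∈ A := by
          rcases mem_insert.1 hiB with h' | h'
          · exact absurd h'.symm hxi
          · exact h'
        refine mem_image.2 ⟨insert x (A.erase i), mem_union_right _ ?_, ?_⟩
        · exact mem_upShF.2 ⟨A.erase i, mem_image.2 ⟨A, mem_filter.2 ⟨hA, hiA⟩, rfl⟩,
            x, mem_erase.2 ⟨hxi, hxX⟩, fun h => hxA (mem_of_mem_erase h), rfl⟩
        · rw [Finset.insert_comm, insert_erase hiA]
    · intro hB
      obtain ⟨C, hC, rfl⟩ := mem_image.1 hB
      rcases mem_union.1 hC with h | h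
      · obtain ⟨hCF, hiC⟩ := mem_filter.1 h
        exact mem_filter.2 ⟨mem_upShF.2 ⟨C, hCF, i, hi, hiC, rfl⟩, mem_insert_self i C⟩
      · obtain ⟨A', hA', x, hxY, hxA', rfl⟩ := mem_upShF.1 h
        obtain ⟨A, hA, rfl⟩ := mem_image.1 hA'
        obtain ⟨hAF, hiA⟩ := mem_filter.1 hA
        obtain ⟨hxi, hxX⟩ := mem_erase.1 hxY
        refine mem_filter.2 ⟨mem_upShF.2 ⟨A, hAF, x, hxX,
          fun h => hxA' (mem_erase.2 ⟨hxi, h⟩), ?_⟩, mem_insert_self i _⟩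
        rw [Finset.insert_comm, insert_erase hiA]
  have hnotin : ∀ C ∈ B0 ∪ upShF Y B1, i ∉ C := by
    intro C hC
    rcases mem_union.1 hC with h | h
    · exact (mem_filter.1 h).2
    · obtain ⟨A', hA', x, hxY, _, rfl⟩ := mem_upShF.1 h
      obtain ⟨A, hA, rfl⟩ := mem_image.1 hA'
      intro hiC
      rcases mem_insert.1 hiC with h' | h'
      · exact (mem_erase.1 hxY).1 h'.symm
      · exact (mem_erase.1 h').1 rfl
  have hinj : Set.InjOn (insert i) (↑(B0 ∪ upShF Y B1) : Set (Finset α)) := by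
    intro C1 h1' C2 h2' h
    have h3 := congrArg (fun s : Finset α => s.erase i) h
    simpa [Finset.erase_insert (hnotin C1 h1'), Finset.erase_insert (hnotin C2 h2')] using h3
  have htot := card_filter_add_card_filter_not (s := upShF X ℱ) (p := fun B => i ∉ B)
  have hneg : (upShF X ℱ).filter (fun B => ¬ i ∉ B) = (upShF X ℱ).filter (fun B => i ∈ B) := by
    apply filter_congr
    intro B _
    simp
  rw [hneg, h1, h2, card_image_of_injOn hinj] at htot
  omega

end GotzmannAux


open GotzmannAux

/-- **Lemma (exchange property).** Let `𝒜` be Gotzmann in `X`, `i ∈ X`, and let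
`L₀, L₁` be the lex segments (for a linear order on `X \ {i}`) with the same
cardinalities as the parts `𝒜₀, 𝒜₁` of the `i`-decomposition of `𝒜`.  If
`∂⁺L₁ ⊆ L₀`, then for every `A ∈ 𝒜` with `i ∈ A` and every `j ∈ X \ A`, the set
`(A \ {i}) ∪ {j}` belongs to `𝒜`. -/
theorem exchange_of_shadow_le {α : Type*} [DecidableEq α]
    (X : Finset α) (d : ℕ) (𝒜 : Set (Finset α)) (i : α) (hi : i ∈ X)
    (hG : IsGotzmannFamily X d 𝒜)
    (r : α → α → Prop) (hr : IsLinearOrderOn r (X.erase i))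
    (L₀ L₁ : Set (Finset α))
    (hL₀ : IsLexSegmentFamily r (X.erase i) d L₀)
    (hL₀c : L₀.ncard = (decompZero i 𝒜).ncard)
    (hL₁ : IsLexSegmentFamily r (X.erase i) (d - 1) L₁)
    (hL₁c : L₁.ncard = (decompOne i 𝒜).ncard)
    (hsub : upShadowIn (X.erase i) L₁ ⊆ L₀) :
    ∀ A ∈ 𝒜, i ∈ A → ∀ j ∈ X, j ∉ A → insert j (A.erase i) ∈ 𝒜 := by
  classical
  intro A hA hiA j hjX hjA
  by_cases hji : j = i
  · subst hji; rwa [Finset.insert_erase hiA]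
  set Y := X.erase i with hYdef
  have hjY : j ∈ Y := Finset.mem_erase.2 ⟨hji, hjX⟩
  have hd : 1 ≤ d := by
    have h1 := (hG.1 A hA).2
    have h2 : 0 < A.card := Finset.card_pos.2 ⟨i, hiA⟩
    omega
  -- finiteness
  have h𝒜fin : 𝒜.Finite := (X.powerset.finite_toSet).subset (fun B hB => by
    simpa [Finset.mem_coe, Finset.mem_powerset] using (hG.1 B hB).1)
  have hL0fin : L₀.Finite := (Y.powerset.finite_toSet).subset (fun B hB => by
    simpa [Finset.mem_coe, Finset.mem_powerset] using (hL₀.1 B hB).1)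
  have hL1fin : L₁.Finite := (Y.powerset.finite_toSet).subset (fun B hB => by
    simpa [Finset.mem_coe, Finset.mem_powerset] using (hL₁.1 B hB).1)
  set 𝒜F := h𝒜fin.toFinset with h𝒜Fdef
  set L0F := hL0fin.toFinset with hL0Fdef
  set L1F := hL1fin.toFinset with hL1Fdef
  have hmem𝒜 : ∀ {B : Finset α}, B ∈ 𝒜F ↔ B ∈ 𝒜 := fun {B} => h𝒜fin.mem_toFinset
  have hmemL0 : ∀ {B : Finset α}, B ∈ L0F ↔ B ∈ L₀ := fun {B} => hL0fin.mem_toFinset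
  have hmemL1 : ∀ {B : Finset α}, B ∈ L1F ↔ B ∈ L₁ := fun {B} => hL1fin.mem_toFinset
  set A0 := 𝒜F.filter (fun B => i ∉ B) with hA0def
  set A1 := (𝒜F.filter (fun B => i ∈ B)).image (fun B => B.erase i) with hA1def
  have hcoeA0 : (↑A0 : Set (Finset α)) = decompZero i 𝒜 := by
    ext B
    simp only [Finset.mem_coe, hA0def, Finset.mem_filter, decompZero, Set.mem_setOf_eq, hmem𝒜]
  have hcoeA1 : (↑A1 : Set (Finset α)) = decompOne i 𝒜 := by
    ext B
    simp only [Finset.mem_coe, hA1def, Finset.mem_image, Finset.mem_filter, decompOne,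
      Set.mem_setOf_eq, hmem𝒜]
    constructor
    · rintro ⟨C, ⟨hC, hiC⟩, rfl⟩; exact ⟨C, hC, hiC, rfl⟩
    · rintro ⟨C, hC, hiC, rfl⟩; exact ⟨C, ⟨hC, hiC⟩, rfl⟩
  -- members of A0, A1
  have hA0mem : ∀ B ∈ A0, B ⊆ Y ∧ B.card = d := by
    intro B hB
    obtain ⟨hB𝒜, hiB⟩ := Finset.mem_filter.1 hB
    obtain ⟨hBX, hBd⟩ := hG.1 B (hmem𝒜.1 hB𝒜)
    exact ⟨Finset.subset_erase.2 ⟨hBX, hiB⟩, hBd⟩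
  -- cardinalities
  have hinj1 : Set.InjOn (fun B : Finset α => B.erase i)
      (↑(𝒜F.filter (fun B => i ∈ B)) : Set (Finset α)) := by
    intro C1 h1 C2 h2 h
    have h1' := (Finset.mem_filter.1 h1).2
    have h2' := (Finset.mem_filter.1 h2).2
    rw [← Finset.insert_erase h1', ← Finset.insert_erase h2']
    exact congrArg (insert i) h
  have hcard𝒜 : 𝒜F.card = A0.card + A1.card := by
    have htot := Finset.card_filter_add_card_filter_not (s := 𝒜F)
      (p := fun B => i ∉ B)
    have hneg : 𝒜F.filter (fun B => ¬ i ∉ B) = 𝒜F.filter (fun B => i ∈ B) := by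
      apply Finset.filter_congr; intro B _; simp
    rw [hneg] at htot
    rw [hA1def, Finset.card_image_of_injOn hinj1, hA0def]
    omega
  have hL0card : L0F.card = A0.card := by
    rw [← Set.ncard_coe_finset L0F, hL0fin.coe_toFinset, hL₀c, ← hcoeA0,
      Set.ncard_coe_finset]
  have hL1card : L1F.card = A1.card := by
    rw [← Set.ncard_coe_finset L1F, hL1fin.coe_toFinset, hL₁c, ← hcoeA1,
      Set.ncard_coe_finset]
  -- upper shadow of L1F inside L0F
  have hsubF : upShF Y L1F ⊆ L0F := by
    intro B hB
    have hB' : (B : Finset α) ∈ upShadowIn Y L₁ := by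
      rw [← hL1fin.coe_toFinset, ← coe_upShF]
      exact hB
    exact hmemL0.2 (hsub hB')
  -- the comparison family
  set CF := L0F ∪ L1F.image (insert i) with hCFdef
  have hiL0 : ∀ B ∈ L0F, i ∉ B := fun B hB h =>
    (Finset.mem_erase.1 ((hL₀.1 B (hmemL0.1 hB)).1 h)).1 rfl
  have hiL1 : ∀ S ∈ L1F, i ∉ S := fun S hS h =>
    (Finset.mem_erase.1 ((hL₁.1 S (hmemL1.1 hS)).1 h)).1 rfl
  have hCFmem : ∀ B ∈ (↑CF : Set (Finset α)), B ⊆ X ∧ B.card = d := by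
    intro B hB
    rcases Finset.mem_union.1 hB with h | h
    · obtain ⟨hBY, hBd⟩ := hL₀.1 B (hmemL0.1 h)
      exact ⟨hBY.trans (Finset.erase_subset i X), hBd⟩
    · obtain ⟨S, hS, rfl⟩ := Finset.mem_image.1 h
      obtain ⟨hSY, hSd⟩ := hL₁.1 S (hmemL1.1 hS)
      refine ⟨Finset.insert_subset hi (hSY.trans (Finset.erase_subset i X)), ?_⟩
      rw [Finset.card_insert_of_notMem (hiL1 S hS), hSd]
      omega
  have hdisj : Disjoint L0F (L1F.image (insert i)) := by
    rw [Finset.disjoint_left]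
    intro B hB hB'
    obtain ⟨S, hS, rfl⟩ := Finset.mem_image.1 hB'
    exact hiL0 _ hB (Finset.mem_insert_self i S)
  have hinj2 : Set.InjOn (insert i) (↑L1F : Set (Finset α)) := by
    intro C1 h1 C2 h2 h
    have h3 := congrArg (fun s : Finset α => s.erase i) h
    simpa [Finset.erase_insert (hiL1 C1 h1), Finset.erase_insert (hiL1 C2 h2)] using h3
  have hCFcard : (↑CF : Set (Finset α)).ncard = 𝒜.ncard := by
    rw [Set.ncard_coe_finset, ← h𝒜fin.coe_toFinset, Set.ncard_coe_finset, hCFdef,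
      Finset.card_union_of_disjoint hdisj, Finset.card_image_of_injOn hinj2,
      hcard𝒜, hL0card, hL1card]
  -- Gotzmann inequality
  have hGz := hG.2 ↑CF hCFmem hCFcard
  have hGzF : (upShF X 𝒜F).card ≤ (upShF X CF).card := by
    have e1 : (upShadowIn X 𝒜).ncard = (upShF X 𝒜F).card := by
      rw [← h𝒜fin.coe_toFinset, ← coe_upShF, Set.ncard_coe_finset]
    have e2 : (upShadowIn X ↑CF).ncard = (upShF X CF).card := by
      rw [← coe_upShF, Set.ncard_coe_finset]
    rw [e1, e2] at hGz
    exact hGz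
  -- decomposition of both shadows
  have c1 := card_upShF_decomp X i hi 𝒜F
  rw [← hYdef, ← hA0def, ← hA1def] at c1
  have c2 := card_upShF_decomp X i hi CF
  have hCF0 : CF.filter (fun B => i ∉ B) = L0F := by
    ext B
    simp only [hCFdef, Finset.mem_filter, Finset.mem_union, Finset.mem_image]
    constructor
    · rintro ⟨h | ⟨S, hS, rfl⟩, hiB⟩
      · exact h
      · exact absurd (Finset.mem_insert_self i S) hiB
    · intro hB
      exact ⟨Or.inl hB, hiL0 B hB⟩
  have hCF1 : (CF.filter (fun B => i ∈ B)).image (fun B => B.erase i) = L1F := by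
    ext S
    constructor
    · intro hS
      obtain ⟨B, hB, rfl⟩ := Finset.mem_image.1 hS
      obtain ⟨hB', hiB⟩ := Finset.mem_filter.1 hB
      rcases Finset.mem_union.1 hB' with h | h
      · exact absurd hiB (hiL0 B h)
      · obtain ⟨T, hT, rfl⟩ := Finset.mem_image.1 h
        rwa [Finset.erase_insert (hiL1 T hT)]
    · intro hS
      refine Finset.mem_image.2 ⟨insert i S, Finset.mem_filter.2
        ⟨Finset.mem_union_right _ (Finset.mem_image.2 ⟨S, hS, rfl⟩),
          Finset.mem_insert_self i S⟩, Finset.erase_insert (hiL1 S hS)⟩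
  rw [← hYdef, hCF0, hCF1] at c2
  have c3 : L0F ∪ upShF Y L1F = L0F := Finset.union_eq_left.2 hsubF
  rw [c3] at c2
  -- Kruskal–Katona
  have c4 : (upShF Y L0F).card ≤ (upShF Y A0).card := by
    refine kk_upper hr (fun B hB => hL₀.1 B (hmemL0.1 hB)) ?_ hA0mem hL0card
    intro B hB A' hA'Y hA'd hlex
    exact hmemL0.2 (hL₀.2 B (hmemL0.1 hB) A' hA'Y hA'd hlex)
  -- combine
  have c5 : (A0 ∪ upShF Y A1).card ≤ A0.card := by omega
  have c6 : upShF Y A1 ⊆ A0 := by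
    have heq := Finset.eq_of_subset_of_card_le Finset.subset_union_left c5
    intro B hB
    rw [heq]
    exact Finset.mem_union_right _ hB
  -- conclude
  have hAe : A.erase i ∈ A1 :=
    Finset.mem_image.2 ⟨A, Finset.mem_filter.2 ⟨hmem𝒜.2 hA, hiA⟩, rfl⟩
  have hjAe : j ∉ A.erase i := fun h => hjA (Finset.mem_of_mem_erase h)
  have hfin : insert j (A.erase i) ∈ upShF Y A1 :=
    mem_upShF.2 ⟨A.erase i, hAe, j, hjY, hjAe, rfl⟩
  exact hmem𝒜.1 (Finset.mem_filter.1 (c6 hfin)).1
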